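/- Let X = ℝ³ with the 3-norm and J its duality map. Let u = (0,−1,1) and v = (−1,1,0). Then Ju = (0,−1,1)/∛2 and Jv = (−1,1,0)/∛2, and the convex combination ψ = (1/4)Ju + (3/4)Jv = (−3,2,1)/(4∛2) does not lie in the image J([v,u]) of the segment [v,u] = {tv+(1−t)u : t ∈ [0,1]}. Hence J([v,u]) is not a segment in X*. -/

import Mathlib

/-- The 3-norm on ℝ³. -/
noncomputable def norm3 (z : ℝ × ℝ × ℝ) : ℝ :=
  (|z.1| ^ 3 + |z.2.1| ^ 3 + |z.2.2| ^ 3) ^ ((1 : ℝ) / 3)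

/-- The 3/2-norm on the dual of (ℝ³, ‖·‖₃). -/
noncomputable def norm32 (ψ : ℝ × ℝ × ℝ) : ℝ :=
  (|ψ.1| ^ ((3 : ℝ) / 2) + |ψ.2.1| ^ ((3 : ℝ) / 2) + |ψ.2.2| ^ ((3 : ℝ) / 2)) ^ ((2 : ℝ) / 3)

/-- The normalized duality map of (ℝ³, ‖·‖₃), with J 0 = 0. -/
noncomputable def Jmap (z : ℝ × ℝ × ℝ) : ℝ × ℝ × ℝ :=
  if z = 0 then 0
  else (|z.1| ^ 2 * Real.sign z.1 / norm3 z,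
        |z.2.1| ^ 2 * Real.sign z.2.1 / norm3 z,
        |z.2.2| ^ 2 * Real.sign z.2.2 / norm3 z)

/-- The standard pairing (dot product) between ℝ³ and its dual. -/
def dot (a b : ℝ × ℝ × ℝ) : ℝ := a.1 * b.1 + a.2.1 * b.2.1 + a.2.2 * b.2.2

lemma c_pos : (0:ℝ) < (2:ℝ) ^ ((1:ℝ)/3) := Real.rpow_pos_of_pos (by norm_num) _

lemma Ju : Jmap (0, -1, 1) = (((2 : ℝ) ^ ((1 : ℝ) / 3))⁻¹) • ((0 : ℝ), (-1 : ℝ), (1 : ℝ)) := by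
  rw [Jmap, if_neg (by simp [Prod.ext_iff] : ((0:ℝ), (-1:ℝ), (1:ℝ)) ≠ 0)]
  have hn : norm3 (0, -1, 1) = (2:ℝ) ^ ((1:ℝ)/3) := by
    unfold norm3; norm_num
  rw [hn]
  have hs1 : Real.sign (-1 : ℝ) = -1 := Real.sign_of_neg (by norm_num)
  have hs2 : Real.sign (1 : ℝ) = 1 := Real.sign_of_pos (by norm_num)
  simp [Prod.ext_iff, hs1, hs2, Real.sign_zero, div_eq_inv_mul]

lemma Jv : Jmap (-1, 1, 0) = (((2 : ℝ) ^ ((1 : ℝ) / 3))⁻¹) • ((-1 : ℝ), (1 : ℝ), (0 : ℝ)) := by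
  rw [Jmap, if_neg (by simp [Prod.ext_iff] : ((-1:ℝ), (1:ℝ), (0:ℝ)) ≠ 0)]
  have hn : norm3 (-1, 1, 0) = (2:ℝ) ^ ((1:ℝ)/3) := by
    unfold norm3; norm_num
  rw [hn]
  have hs1 : Real.sign (-1 : ℝ) = -1 := Real.sign_of_neg (by norm_num)
  have hs2 : Real.sign (1 : ℝ) = 1 := Real.sign_of_pos (by norm_num)
  simp [Prod.ext_iff, hs1, hs2, Real.sign_zero, div_eq_inv_mul]

lemma norm3_pos {z : ℝ × ℝ × ℝ} (hz : z ≠ 0) : 0 < norm3 z := by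
  unfold norm3
  apply Real.rpow_pos_of_pos
  obtain ⟨x, y, w⟩ := z
  have h : x ≠ 0 ∨ y ≠ 0 ∨ w ≠ 0 := by
    by_contra h; push_neg at h
    exact hz (by simp [Prod.ext_iff, h.1, h.2.1, h.2.2])
  have hx := abs_nonneg x; have hy := abs_nonneg y; have hw := abs_nonneg w
  rcases h with h | h | h
  · have := abs_pos.mpr h; nlinarith [pow_pos this 3, pow_nonneg hy 3, pow_nonneg hw 3]
  · have := abs_pos.mpr h; nlinarith [pow_pos this 3, pow_nonneg hx 3, pow_nonneg hw 3]
  · have := abs_pos.mpr h; nlinarith [pow_pos this 3, pow_nonneg hx 3, pow_nonneg hy 3]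

set_option maxHeartbeats 1000000 in
theorem stmt5 :
    let u : ℝ × ℝ × ℝ := (0, -1, 1)
    let v : ℝ × ℝ × ℝ := (-1, 1, 0)
    let ψ : ℝ × ℝ × ℝ := (1 / 4 : ℝ) • Jmap u + (3 / 4 : ℝ) • Jmap v
    Jmap u = (((2 : ℝ) ^ ((1 : ℝ) / 3))⁻¹) • ((0 : ℝ), (-1 : ℝ), (1 : ℝ)) ∧
    Jmap v = (((2 : ℝ) ^ ((1 : ℝ) / 3))⁻¹) • ((-1 : ℝ), (1 : ℝ), (0 : ℝ)) ∧
    ψ = ((4 * (2 : ℝ) ^ ((1 : ℝ) / 3))⁻¹) • ((-3 : ℝ), (2 : ℝ), (1 : ℝ)) ∧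
    ψ ∉ Jmap '' segment ℝ v u ∧
    Jmap '' segment ℝ v u ≠ segment ℝ (Jmap v) (Jmap u) := by
  intro u v ψ
  set c : ℝ := (2:ℝ) ^ ((1:ℝ)/3) with hc
  have hc0 : (0:ℝ) < c := c_pos
  have hcne : c ≠ 0 := ne_of_gt hc0
  have h3 : ψ = ((4 * c)⁻¹) • ((-3 : ℝ), (2 : ℝ), (1 : ℝ)) := by
    show (1 / 4 : ℝ) • Jmap u + (3 / 4 : ℝ) • Jmap v = _
    rw [Ju, Jv]
    simp only [Prod.ext_iff, Prod.smul_mk, smul_eq_mul, Prod.fst_add, Prod.snd_add,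
      Prod.mk_add_mk]
    refine ⟨?_, ?_, ?_⟩ <;> field_simp <;> ring
  have h4 : ψ ∉ Jmap '' segment ℝ v u := by
    rintro ⟨w, hw, hJw⟩
    rw [segment_eq_image] at hw
    obtain ⟨t, ⟨ht0, ht1⟩, hwt⟩ := hw
    -- w = (1-t) • v + t • u ; set a = 1 - t, b = t
    set a : ℝ := 1 - t with ha
    set b : ℝ := t with hb
    have ha0 : 0 ≤ a := by linarith
    have hb0 : 0 ≤ b := ht0
    have hw_eq : w = (-a, a - b, b) := by
      rw [← hwt]
      show (1 - t) • v + t • u = _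
      simp [Prod.ext_iff, u, v, Prod.smul_mk, smul_eq_mul]
      refine ⟨?_, ?_, ?_⟩ <;> simp only [ha, hb] <;> ring
    have hwne : w ≠ 0 := by
      rw [hw_eq]
      intro h
      rw [Prod.ext_iff, Prod.ext_iff] at h
      simp at h
      obtain ⟨h1, _, h3'⟩ := h
      simp only [ha, hb] at h1 h3'
      linarith
    have hN := norm3_pos hwne
    set N := norm3 w with hNdef
    rw [h3] at hJw
    rw [Jmap, if_neg hwne, hw_eq] at hJw
    simp only [Prod.ext_iff, Prod.smul_mk, smul_eq_mul] at hJw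
    obtain ⟨e1, e2, e3⟩ := hJw
    have hN' : 0 < norm3 (-a, a - b, b) := hw_eq ▸ hN
    set M := norm3 (-a, a - b, b) with hMdef
    have hMne : M ≠ 0 := ne_of_gt hN'
    have h4c : (0:ℝ) < 4 * c := by positivity
    -- b > 0
    have hbpos : 0 < b := by
      rcases hb0.lt_or_eq with h | h
      · exact h
      · exfalso
        have hpos : (0:ℝ) < (4*c)⁻¹ * 1 := by positivity
        rw [← e3, ← h, Real.sign_zero] at hpos
        simp at hpos
    -- a > 0
    have hapos : 0 < a := by
      rcases ha0.lt_or_eq with h | h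
      · exact h
      · exfalso
        have hneg : (4*c)⁻¹ * (-3) < (0:ℝ) := by
          have : (0:ℝ) < (4*c)⁻¹ := by positivity
          nlinarith
        rw [← e1, ← h] at hneg
        simp [Real.sign_zero] at hneg
    rw [abs_neg, abs_of_pos hapos, Real.sign_of_neg (by linarith : -a < 0)] at e1
    rw [abs_of_pos hbpos, Real.sign_of_pos hbpos] at e3
    have E1 : a^2 * (-1) = (4*c)⁻¹ * (-3) * M := (div_eq_iff hMne).mp e1
    have E3 : b^2 * 1 = (4*c)⁻¹ * 1 * M := (div_eq_iff hMne).mp e3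
    set D : ℝ := (4*c)⁻¹ * M with hDdef
    have hD : 0 < D := by positivity
    have hA : a^2 = 3 * D := by rw [hDdef]; nlinarith [E1]
    have hB : b^2 = D := by rw [hDdef]; nlinarith [E3]
    have hab : b < a := by nlinarith [hA, hB, hD, ha0, hbpos, mul_pos hbpos hbpos]
    rw [abs_of_pos (by linarith : (0:ℝ) < a - b),
      Real.sign_of_pos (by linarith : (0:ℝ) < a - b)] at e2
    have E2 : (a - b)^2 * 1 = (4*c)⁻¹ * 2 * M := (div_eq_iff hMne).mp e2
    have hAB : (a - b)^2 = 2 * D := by rw [hDdef]; nlinarith [E2]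
    have habD : a * b = D := by linear_combination (hA + hB - hAB) / 2
    have hfin : 3 * D^2 = D^2 := by
      calc 3 * D^2 = a^2 * b^2 := by rw [hA, hB]; ring
        _ = (a*b)^2 := by ring
        _ = D^2 := by rw [habD]
    nlinarith [mul_pos hD hD]
  refine ⟨Ju, Jv, h3, h4, ?_⟩
  intro heq
  apply h4
  rw [heq]
  show (1 / 4 : ℝ) • Jmap u + (3 / 4 : ℝ) • Jmap v ∈ _
  rw [add_comm]
  exact ⟨3/4, 1/4, by norm_num, by norm_num, by norm_num, rfl⟩
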